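/- HM–GM–AM operator inequality: for positive definite A, B and s ∈ [0,1], ((1−s)A^(-1) + sB^(-1))^(-1) ⪯ A#ₛB ⪯ (1−s)A + sB in the Loewner order. -/

import Mathlib

open scoped ComplexOrder

/-- Real power of a matrix via the continuous functional calculus (for Hermitian matrices). -/
noncomputable def mpow {d : ℕ} (A : Matrix (Fin d) (Fin d) ℂ) (s : ℝ) : Matrix (Fin d) (Fin d) ℂ :=
  cfc (fun x : ℝ => x ^ s) A

/-- The s-weighted geometric mean A #ₛ B = A^(1/2) (A^(-1/2) B A^(-1/2))^s A^(1/2). -/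
noncomputable def gm {d : ℕ} (s : ℝ) (A B : Matrix (Fin d) (Fin d) ℂ) : Matrix (Fin d) (Fin d) ℂ :=
  mpow A (1/2) * mpow (mpow A (-(1/2)) * B * mpow A (-(1/2))) s * mpow A (1/2)

open Matrix

section Aux

variable {d : ℕ}

lemma contOn_spec (A : Matrix (Fin d) (Fin d) ℂ) (f : ℝ → ℝ) :
    ContinuousOn f (spectrum ℝ A) := by
  rw [continuousOn_iff_continuous_restrict]
  exact continuous_of_discreteTopology

lemma spec_pos {C : Matrix (Fin d) (Fin d) ℂ} (hC : C.PosDef) :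
    ∀ x ∈ spectrum ℝ C, 0 < x := by
  intro x hx
  rw [Matrix.IsHermitian.spectrum_real_eq_range_eigenvalues hC.1] at hx
  obtain ⟨i, rfl⟩ := hx
  exact hC.eigenvalues_pos i

lemma cfc_psd {C : Matrix (Fin d) (Fin d) ℂ} (hC : C.IsHermitian) (f : ℝ → ℝ)
    (hf : ∀ x ∈ spectrum ℝ C, 0 ≤ f x) : (cfc f C).PosSemidef := by
  rw [Matrix.IsHermitian.cfc_eq hC]
  unfold Matrix.IsHermitian.cfc
  rw [Unitary.conjStarAlgAut_apply, Matrix.star_eq_conjTranspose]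
  refine Matrix.PosSemidef.mul_mul_conjTranspose_same ?_ _
  refine Matrix.PosSemidef.diagonal fun i => ?_
  exact RCLike.ofReal_nonneg.mpr <| hf _ (hC.eigenvalues_mem_spectrum_real i)

lemma cfc_mul_eq {C : Matrix (Fin d) (Fin d) ℂ} (hC : C.IsHermitian) (f g h : ℝ → ℝ)
    (hfg : ∀ x ∈ spectrum ℝ C, f x * g x = h x) :
    cfc f C * cfc g C = cfc h C := by
  rw [← cfc_mul f g C (contOn_spec C f) (contOn_spec C g)]
  exact cfc_congr hfg

lemma posDef_conj {B M : Matrix (Fin d) (Fin d) ℂ} (hB : B.PosDef)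
    (hM : IsUnit M.det) : (Mᴴ * B * M).PosDef := by
  refine Matrix.PosDef.of_dotProduct_mulVec_pos (Matrix.isHermitian_conjTranspose_mul_mul _ hB.1) fun x hx => ?_
  have h1 : M *ᵥ x ≠ 0 := by
    intro h
    apply hx
    have h2 := congrArg (fun v => M⁻¹ *ᵥ v) h
    simpa [Matrix.mulVec_mulVec, Matrix.nonsing_inv_mul _ hM] using h2
  have h3 := hB.dotProduct_mulVec_pos h1
  simpa only [Matrix.star_mulVec, Matrix.dotProduct_mulVec, Matrix.vecMul_vecMul] using h3

lemma sandwich_cancel {X Y Z W : Matrix (Fin d) (Fin d) ℂ} (h : Y * Z = 1) :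
    (X * Y) * (Z * W) = X * W := by
  rw [mul_assoc X Y, ← mul_assoc Y Z, h, one_mul]

lemma scalar_am {x s : ℝ} (hx : 0 < x) (hs0 : 0 ≤ s) (hs1 : s ≤ 1) :
    x ^ s ≤ (1 - s) + s * x := by
  have h := Real.geom_mean_le_arith_mean2_weighted (w₁ := 1 - s) (w₂ := s) (p₁ := 1) (p₂ := x)
    (by linarith) hs0 zero_le_one hx.le (by ring)
  simpa using h

lemma hm_pos {x s : ℝ} (hx : 0 < x) (hs0 : 0 ≤ s) (hs1 : s ≤ 1) :
    0 < (1 - s) + s * x⁻¹ := by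
  rcases eq_or_lt_of_le hs1 with h | h
  · have : s = 1 := h.symm ▸ rfl
    subst this
    simpa using inv_pos.mpr hx
  · have h2 : 0 ≤ s * x⁻¹ := mul_nonneg hs0 (inv_pos.mpr hx).le
    linarith

lemma scalar_hm {x s : ℝ} (hx : 0 < x) (hs0 : 0 ≤ s) (hs1 : s ≤ 1) :
    ((1 - s) + s * x⁻¹)⁻¹ ≤ x ^ s := by
  have hxi : (0:ℝ) < x⁻¹ := inv_pos.mpr hx
  have h := scalar_am hxi hs0 hs1
  have hpos : 0 < x⁻¹ ^ s := Real.rpow_pos_of_pos hxi s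
  have h2 : ((1 - s) + s * x⁻¹)⁻¹ ≤ (x⁻¹ ^ s)⁻¹ := inv_anti₀ hpos h
  rwa [Real.inv_rpow hx.le, inv_inv] at h2

end Aux

theorem gm_HM_GM_AM {d : ℕ} (A B : Matrix (Fin d) (Fin d) ℂ)
    (hA : A.PosDef) (hB : B.PosDef) (s : ℝ) (hs : s ∈ Set.Icc (0 : ℝ) 1) :
    (gm s A B - ((1 - s) • A⁻¹ + s • B⁻¹)⁻¹).PosSemidef ∧
    ((1 - s) • A + s • B - gm s A B).PosSemidef := by
  obtain ⟨hs0, hs1⟩ := hs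
  have hAsa : IsSelfAdjoint A := hA.1
  have hAspec : ∀ x ∈ spectrum ℝ A, 0 < x := spec_pos hA
  set R : Matrix (Fin d) (Fin d) ℂ := mpow A (1/2) with hRdef
  set Ri : Matrix (Fin d) (Fin d) ℂ := mpow A (-(1/2)) with hRidef
  have hRsa : IsSelfAdjoint R := cfc_predicate _ A
  have hRisa : IsSelfAdjoint Ri := cfc_predicate _ A
  have hRh : Rᴴ = R := by rw [← Matrix.star_eq_conjTranspose]; exact hRsa.star_eq
  have hRih : Riᴴ = Ri := by rw [← Matrix.star_eq_conjTranspose]; exact hRisa.star_eq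
  have hRR : R * R = A := by
    rw [hRdef]
    show cfc (fun x : ℝ => x ^ (1/2 : ℝ)) A * cfc (fun x : ℝ => x ^ (1/2 : ℝ)) A = A
    rw [cfc_mul_eq hA.1 _ _ id (fun x hx => ?_), cfc_id ℝ A hAsa]
    rw [← Real.rpow_add (hAspec x hx)]
    norm_num
  have hRiR : Ri * R = 1 := by
    rw [hRdef, hRidef]
    show cfc (fun x : ℝ => x ^ (-(1/2) : ℝ)) A * cfc (fun x : ℝ => x ^ (1/2 : ℝ)) A = 1
    rw [cfc_mul_eq hA.1 _ _ (fun _ => 1) (fun x hx => ?_), cfc_const_one ℝ A hAsa]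
    rw [← Real.rpow_add (hAspec x hx)]
    norm_num
  have hRRi : R * Ri = 1 := by
    rw [hRdef, hRidef]
    show cfc (fun x : ℝ => x ^ (1/2 : ℝ)) A * cfc (fun x : ℝ => x ^ (-(1/2) : ℝ)) A = 1
    rw [cfc_mul_eq hA.1 _ _ (fun _ => 1) (fun x hx => ?_), cfc_const_one ℝ A hAsa]
    rw [← Real.rpow_add (hAspec x hx)]
    norm_num
  set C : Matrix (Fin d) (Fin d) ℂ := Ri * B * Ri with hCdef
  have hRiUnit : IsUnit Ri.det := Matrix.isUnit_det_of_left_inverse hRRi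
  have hC : C.PosDef := by
    have h := posDef_conj hB hRiUnit
    rwa [hRih] at h
  have hCsa : IsSelfAdjoint C := hC.1
  have hCspec : ∀ x ∈ spectrum ℝ C, 0 < x := spec_pos hC
  have hgm : gm s A B = R * cfc (fun x : ℝ => x ^ s) C * R := rfl
  have hAinv : A⁻¹ = Ri * Ri := by
    apply Matrix.inv_eq_left_inv
    rw [← hRR, sandwich_cancel hRiR]
    exact hRiR
  have hBC : R * C * R = B := by
    show R * (Ri * B * Ri) * R = B
    rw [← mul_assoc R (Ri * B) Ri, mul_assoc (R * (Ri * B)) Ri R, hRiR, mul_one,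
      ← mul_assoc R Ri B, hRRi, one_mul]
  have hCC : cfc (fun x : ℝ => x⁻¹) C * C = 1 := by
    have h := cfc_mul_eq hCsa (fun x : ℝ => x⁻¹) id (fun _ => 1)
      (fun x hx => inv_mul_cancel₀ (hCspec x hx).ne')
    rwa [cfc_id ℝ C hCsa, cfc_const_one ℝ C hCsa] at h
  have hCinv : C⁻¹ = cfc (fun x : ℝ => x⁻¹) C := Matrix.inv_eq_left_inv hCC
  have hBinv : B⁻¹ = Ri * cfc (fun x : ℝ => x⁻¹) C * Ri := by
    apply Matrix.inv_eq_left_inv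
    rw [← hBC, mul_assoc R C R, sandwich_cancel hRiR, sandwich_cancel hCC]
    exact hRiR
  -- decompose affine cfc's
  have hconst : ∀ r : ℝ, cfc (fun _ : ℝ => r) C = r • (1 : Matrix (Fin d) (Fin d) ℂ) := by
    intro r
    rw [cfc_const r C hCsa, Algebra.algebraMap_eq_smul_one]
  have haff : ∀ f : ℝ → ℝ, cfc (fun x : ℝ => (1 - s) + s * f x) C
      = (1 - s) • (1 : Matrix (Fin d) (Fin d) ℂ) + s • cfc f C := by
    intro f
    rw [cfc_add (a := C) (f := fun _ : ℝ => (1 - s)) (g := fun x => s * f x)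
      (contOn_spec C _) (contOn_spec C _), hconst, cfc_const_mul s f C (contOn_spec C f)]
  -- AM part
  have hamf : cfc (fun x : ℝ => ((1 - s) + s * x) - x ^ s) C
      = ((1 - s) • (1 : Matrix (Fin d) (Fin d) ℂ) + s • C) - cfc (fun x : ℝ => x ^ s) C := by
    rw [cfc_sub (fun x : ℝ => (1 - s) + s * x) (fun x : ℝ => x ^ s) C
      (contOn_spec C _) (contOn_spec C _), haff (fun x => x), cfc_id' ℝ C hCsa]
  have keyAM : (1 - s) • A + s • B - gm s A B
      = R * cfc (fun x : ℝ => ((1 - s) + s * x) - x ^ s) C * R := by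
    rw [hamf, hgm]
    simp only [mul_sub, sub_mul, mul_add, add_mul, mul_smul_comm, smul_mul_assoc, mul_one]
    rw [hRR, hBC]
  have hAMnn : ∀ x ∈ spectrum ℝ C, 0 ≤ ((1 - s) + s * x) - x ^ s := fun x hx =>
    sub_nonneg.mpr (scalar_am (hCspec x hx) hs0 hs1)
  have hAM : ((1 - s) • A + s • B - gm s A B).PosSemidef := by
    rw [keyAM]
    have h := (cfc_psd hCsa _ hAMnn).conjTranspose_mul_mul_same R
    rwa [hRh] at h
  -- HM part
  have hHMpos : ∀ x ∈ spectrum ℝ C, 0 < (1 - s) + s * x⁻¹ := fun x hx =>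
    hm_pos (hCspec x hx) hs0 hs1
  have hHMrw : (1 - s) • A⁻¹ + s • B⁻¹ = Ri * cfc (fun x : ℝ => (1 - s) + s * x⁻¹) C * Ri := by
    rw [haff (fun x => x⁻¹), hAinv, hBinv, ← hCinv]
    simp only [mul_add, add_mul, mul_smul_comm, smul_mul_assoc, mul_one]
  have hHMmul : cfc (fun x : ℝ => ((1 - s) + s * x⁻¹)⁻¹) C
      * cfc (fun x : ℝ => (1 - s) + s * x⁻¹) C = 1 := by
    rw [cfc_mul_eq hCsa _ _ (fun _ => 1) (fun x hx => inv_mul_cancel₀ (hHMpos x hx).ne')]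
    exact cfc_const_one ℝ C hCsa
  have hHMinv : ((1 - s) • A⁻¹ + s • B⁻¹)⁻¹
      = R * cfc (fun x : ℝ => ((1 - s) + s * x⁻¹)⁻¹) C * R := by
    apply Matrix.inv_eq_left_inv
    rw [hHMrw, mul_assoc Ri (cfc (fun x : ℝ => (1 - s) + s * x⁻¹) C) Ri,
      sandwich_cancel hRRi, sandwich_cancel hHMmul]
    exact hRRi
  have hhmf : cfc (fun x : ℝ => x ^ s - ((1 - s) + s * x⁻¹)⁻¹) C
      = cfc (fun x : ℝ => x ^ s) C - cfc (fun x : ℝ => ((1 - s) + s * x⁻¹)⁻¹) C :=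
    cfc_sub _ _ C (contOn_spec C _) (contOn_spec C _)
  have keyHM : gm s A B - ((1 - s) • A⁻¹ + s • B⁻¹)⁻¹
      = R * cfc (fun x : ℝ => x ^ s - ((1 - s) + s * x⁻¹)⁻¹) C * R := by
    rw [hhmf, hgm, hHMinv]
    simp only [mul_sub, sub_mul]
  have hHMnn : ∀ x ∈ spectrum ℝ C, 0 ≤ x ^ s - ((1 - s) + s * x⁻¹)⁻¹ := fun x hx =>
    sub_nonneg.mpr (scalar_hm (hCspec x hx) hs0 hs1)
  have hHM : (gm s A B - ((1 - s) • A⁻¹ + s • B⁻¹)⁻¹).PosSemidef := by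
    rw [keyHM]
    have h := (cfc_psd hCsa _ hHMnn).conjTranspose_mul_mul_same R
    rwa [hRh] at h
  exact ⟨hHM, hAM⟩
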